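/- Let z : [t₀, ∞) → ℝ^N be continuously differentiable, g : [t₀, ∞) → (0, ∞) continuously differentiable, z̄ ∈ ℝ^N, t₀ > 0 and C > 0. If ‖z(t) - z̄ + g(t)·ż(t)‖² ≤ C for all t ≥ t₀, then z is bounded on [t₀, ∞) and sup_{t ≥ t₀} ‖g(t)·ż(t)‖ < ∞. -/

import Mathlib

open Set

lemma aux_stay_below {f f' : ℝ → ℝ} {a M : ℝ}
    (hf : ∀ t ∈ Set.Ici a, HasDerivAt f (f' t) t)
    (hneg : ∀ t ∈ Set.Ici a, M < f t → f' t ≤ 0)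
    (ha : f a ≤ M) : ∀ t ∈ Set.Ici a, f t ≤ M := by
  intro t₁ ht₁
  by_contra h
  push_neg at h
  have hcont : ContinuousOn f (Set.Icc a t₁) := fun t ht =>
    ((hf t ht.1).continuousAt).continuousWithinAt
  set S : Set ℝ := Set.Icc a t₁ ∩ f ⁻¹' Set.Iic M with hS
  have hSclosed : IsClosed S :=
    hcont.preimage_isClosed_of_isClosed isClosed_Icc isClosed_Iic
  have haS : a ∈ S := ⟨⟨le_refl a, ht₁⟩, ha⟩
  have hSne : S.Nonempty := ⟨a, haS⟩
  have hSbdd : BddAbove S := ⟨t₁, fun t ht => ht.1.2⟩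
  set s := sSup S with hs
  have hsS : s ∈ S := hSclosed.csSup_mem hSne hSbdd
  have hsa : a ≤ s := le_csSup hSbdd haS
  have hst₁ : s ≤ t₁ := hsS.1.2
  have hfs : f s ≤ M := hsS.2
  have hslt : s < t₁ := lt_of_le_of_ne hst₁ fun heq => absurd (heq ▸ hfs) (not_le.2 h)
  -- on (s, t₁), f > M
  have hgt : ∀ t ∈ Set.Ioo s t₁, M < f t := by
    intro t ht
    by_contra hle
    push_neg at hle
    have : t ∈ S := ⟨⟨le_trans hsa ht.1.le, ht.2.le⟩, hle⟩
    exact absurd (le_csSup hSbdd this) (not_le.2 ht.1)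
  have hanti : AntitoneOn f (Set.Icc s t₁) := by
    apply antitoneOn_of_deriv_nonpos (convex_Icc s t₁)
    · exact hcont.mono (Set.Icc_subset_Icc_left hsa)
    · intro t ht
      rw [interior_Icc] at ht
      exact ((hf t (le_trans hsa ht.1.le)).differentiableAt).differentiableWithinAt
    · intro t ht
      rw [interior_Icc] at ht
      have hta : t ∈ Set.Ici a := le_trans hsa ht.1.le
      rw [(hf t hta).deriv]
      exact hneg t hta (hgt t ht)
  have := hanti ⟨le_refl s, hslt.le⟩ ⟨hslt.le, le_refl t₁⟩ hslt.le
  exact absurd (le_trans this hfs) (not_le.2 h)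

theorem stmt_3 {N : ℕ} (t₀ C : ℝ) (ht₀ : 0 < t₀) (hC : 0 < C)
    (z z' : ℝ → EuclideanSpace ℝ (Fin N)) (g g' : ℝ → ℝ)
    (zb : EuclideanSpace ℝ (Fin N))
    (hz : ∀ t ∈ Set.Ici t₀, HasDerivAt z (z' t) t)
    (hz' : ContinuousOn z' (Set.Ici t₀))
    (hg : ∀ t ∈ Set.Ici t₀, HasDerivAt g (g' t) t)
    (hg' : ContinuousOn g' (Set.Ici t₀))
    (hgpos : ∀ t ∈ Set.Ici t₀, 0 < g t)
    (hbound : ∀ t ∈ Set.Ici t₀, ‖z t - zb + g t • z' t‖ ^ 2 ≤ C) :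
    (∃ M, ∀ t ∈ Set.Ici t₀, ‖z t‖ ≤ M) ∧
      (∃ M, ∀ t ∈ Set.Ici t₀, ‖g t • z' t‖ ≤ M) := by
  set w : ℝ → EuclideanSpace ℝ (Fin N) := fun t => z t - zb with hw
  have hwderiv : ∀ t ∈ Set.Ici t₀, HasDerivAt w (z' t) t := fun t ht =>
    (hz t ht).sub_const zb
  set v : ℝ → ℝ := fun t => ‖w t‖ ^ 2 with hv
  set v' : ℝ → ℝ := fun t => 2 * inner ℝ (w t) (z' t) with hv'
  have hvderiv : ∀ t ∈ Set.Ici t₀, HasDerivAt v (v' t) t := by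
    intro t ht
    have h1 : HasDerivAt (fun t => (inner ℝ (w t) (w t) : ℝ))
        (inner ℝ (w t) (z' t) + inner ℝ (z' t) (w t)) t :=
      (hwderiv t ht).inner ℝ (hwderiv t ht)
    have h2 : (inner ℝ (w t) (z' t) + inner ℝ (z' t) (w t) : ℝ) = v' t := by
      have := real_inner_comm (z' t) (w t)
      simp only [hv']; linarith
    have h3 : (fun t => (inner ℝ (w t) (w t) : ℝ)) = v := by
      funext s; rw [real_inner_self_eq_norm_sq]
    rw [h2, h3] at h1; exact h1
  set M : ℝ := max (v t₀) C with hM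
  have hkey : ∀ t ∈ Set.Ici t₀, v t ≤ M := by
    apply aux_stay_below hvderiv _ (le_max_left _ _)
    intro t ht hMlt
    have hgt := hgpos t ht
    set b : EuclideanSpace ℝ (Fin N) := z t - zb + g t • z' t with hb
    have hbnorm : ‖b‖ ≤ Real.sqrt C := by
      have := hbound t ht
      nlinarith [Real.sq_sqrt hC.le, Real.sqrt_nonneg C, norm_nonneg b,
        abs_nonneg (‖b‖ - Real.sqrt C)]
    have hvC : C < v t := lt_of_le_of_lt (le_max_right _ _) hMlt
    have hvpos : 0 < v t := lt_trans hC hvC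
    have hwn : ‖w t‖ = Real.sqrt (v t) := by
      rw [hv]; rw [Real.sqrt_sq (norm_nonneg _)]
    -- inner ℝ (w t) (g t • z' t) = inner ℝ (w t) b - v t
    have hsplit : (inner ℝ (w t) (g t • z' t) : ℝ) = inner ℝ (w t) b - v t := by
      have : g t • z' t = b - w t := by
        show g t • z' t = (z t - zb + g t • z' t) - (z t - zb); module
      rw [this, inner_sub_right, real_inner_self_eq_norm_sq, hv]
    have hib : (inner ℝ (w t) b : ℝ) ≤ Real.sqrt (v t) * Real.sqrt C := by
      calc (inner ℝ (w t) b : ℝ) ≤ ‖w t‖ * ‖b‖ := real_inner_le_norm _ _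
        _ ≤ Real.sqrt (v t) * Real.sqrt C := by
            rw [hwn]
            exact mul_le_mul_of_nonneg_left hbnorm (Real.sqrt_nonneg _)
    have hsqrtC : Real.sqrt C < Real.sqrt (v t) := Real.sqrt_lt_sqrt hC.le hvC
    have hvsq : Real.sqrt (v t) * Real.sqrt (v t) = v t := Real.mul_self_sqrt hvpos.le
    have hinner_neg : (inner ℝ (w t) (g t • z' t) : ℝ) ≤ 0 := by
      rw [hsplit]
      have : Real.sqrt (v t) * Real.sqrt C ≤ v t := by
        nlinarith [Real.sqrt_nonneg (v t)]
      linarith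
    have hscal : (inner ℝ (w t) (g t • z' t) : ℝ) = g t * inner ℝ (w t) (z' t) :=
      real_inner_smul_right _ _ _
    have : inner ℝ (w t) (z' t) ≤ (0:ℝ) := by
      by_contra hpos
      push_neg at hpos
      nlinarith
    simp only [hv']
    linarith
  -- conclusions
  constructor
  · refine ⟨‖zb‖ + Real.sqrt M, fun t ht => ?_⟩
    have hvM := hkey t ht
    have : ‖w t‖ ≤ Real.sqrt M := by
      rw [show ‖w t‖ = Real.sqrt (v t) from (Real.sqrt_sq (norm_nonneg _)).symm]
      exact Real.sqrt_le_sqrt hvM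
    calc ‖z t‖ = ‖zb + w t‖ := by
          congr 1; show z t = zb + (z t - zb); module
      _ ≤ ‖zb‖ + ‖w t‖ := norm_add_le _ _
      _ ≤ ‖zb‖ + Real.sqrt M := by linarith
  · refine ⟨Real.sqrt C + Real.sqrt M, fun t ht => ?_⟩
    have hvM := hkey t ht
    have hwle : ‖w t‖ ≤ Real.sqrt M := by
      rw [show ‖w t‖ = Real.sqrt (v t) from (Real.sqrt_sq (norm_nonneg _)).symm]
      exact Real.sqrt_le_sqrt hvM
    have hbnorm : ‖z t - zb + g t • z' t‖ ≤ Real.sqrt C := by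
      have := hbound t ht
      nlinarith [Real.sq_sqrt hC.le, Real.sqrt_nonneg C,
        norm_nonneg (z t - zb + g t • z' t)]
    calc ‖g t • z' t‖ = ‖(z t - zb + g t • z' t) - w t‖ := by
          congr 1; show g t • z' t = (z t - zb + g t • z' t) - (z t - zb); module
      _ ≤ ‖z t - zb + g t • z' t‖ + ‖w t‖ := norm_sub_le _ _
      _ ≤ Real.sqrt C + Real.sqrt M := add_le_add hbnorm hwle
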